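/- Let L be a first-order language with no function symbols in which every relation symbol has arity 1, and let φ be an L-sentence. If there exists an infinite type N and an L-structure on N in which φ is realized, then for every infinite type M there exists an L-structure on M in which φ is realized. -/

import Mathlib

open FirstOrder Language

namespace MonadicAux

open Cardinal

universe u v

variable {L : FirstOrder.Language.{u, v}}

/-- The set of relation symbols occurring in a bounded formula. -/
def occ : ∀ {n : ℕ}, L.BoundedFormula Empty n → Set (Σ k, L.Relations k)
  | _, .falsum => ∅
  | _, .equal _ _ => ∅
  | _, .rel R _ => {⟨_, R⟩}
  | _, .imp f g => occ f ∪ occ g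
  | _, .all f => occ f

theorem occ_finite : ∀ {n : ℕ} (f : L.BoundedFormula Empty n), (occ f).Finite
  | _, .falsum => Set.finite_empty
  | _, .equal _ _ => Set.finite_empty
  | _, .rel _ _ => Set.finite_singleton _
  | _, .imp f g => (occ_finite f).union (occ_finite g)
  | _, .all f => occ_finite f

/-- The relational sublanguage with relation symbols from `s`. -/
def sub (s : Set (Σ k, L.Relations k)) : FirstOrder.Language.{u, v} :=
  ⟨fun _ => PEmpty, fun n => {R : L.Relations n // ⟨n, R⟩ ∈ s}⟩

/-- The inclusion map from the sublanguage. -/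
def subLHom (s : Set (Σ k, L.Relations k)) : sub s →ᴸ L :=
  ⟨fun {_} f => f.elim, fun {_} R => R.1⟩

theorem sub_card_le {s : Set (Σ k, L.Relations k)} (hs : s.Finite) :
    (sub s).card ≤ ℵ₀ := by
  have : Finite s := hs
  have h1 : Finite (Σ l, (sub s).Functions l) := by
    have : IsEmpty (Σ l, (sub s).Functions l) := ⟨fun x => x.2.elim⟩
    infer_instance
  have h2 : Finite (Σ l, (sub s).Relations l) :=
    Finite.of_surjective
      (fun x : ↥s => (⟨x.1.1, ⟨x.1.2, x.2⟩⟩ : Σ l, (sub s).Relations l))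
      (by rintro ⟨l, R, hR⟩; exact ⟨⟨⟨l, R⟩, hR⟩, rfl⟩)
  have : Finite (sub s).Symbols := by unfold Language.Symbols; infer_instance
  exact le_of_lt (lt_of_lt_of_le (Cardinal.lt_aleph0_of_finite _) le_rfl) |>.trans le_rfl
    |>.trans_eq rfl

/-- Translate a term into the sublanguage (there are no function symbols). -/
def subTerm (hfun : ∀ n, IsEmpty (L.Functions n)) {α : Type*} :
    L.Term α → (sub s).Term α
  | .var x => .var x
  | .func f _ => (hfun _).elim f

theorem onTerm_subTerm (hfun : ∀ n, IsEmpty (L.Functions n)) {α : Type*}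
    (s : Set (Σ k, L.Relations k)) (t : L.Term α) :
    (subLHom s).onTerm (subTerm hfun t) = t := by
  cases t with
  | var x => rfl
  | func f _ => exact (hfun _).elim f

/-- Translate a formula into the sublanguage of its symbols. -/
def subFormula (hfun : ∀ n, IsEmpty (L.Functions n)) {s : Set (Σ k, L.Relations k)} :
    ∀ {n : ℕ} (f : L.BoundedFormula Empty n), occ f ⊆ s → (sub s).BoundedFormula Empty n
  | _, .falsum, _ => .falsum
  | _, .equal t₁ t₂, _ => .equal (subTerm hfun t₁) (subTerm hfun t₂)
  | _, .rel R ts, h => .rel ⟨R, h rfl⟩ (fun i => subTerm hfun (ts i))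
  | _, .imp f g, h =>
      .imp (subFormula hfun f (fun x hx => h (Or.inl hx)))
        (subFormula hfun g (fun x hx => h (Or.inr hx)))
  | _, .all f, h => .all (subFormula hfun f h)

theorem onBoundedFormula_subFormula (hfun : ∀ n, IsEmpty (L.Functions n))
    {s : Set (Σ k, L.Relations k)} :
    ∀ {n : ℕ} (f : L.BoundedFormula Empty n) (h : occ f ⊆ s),
      (subLHom s).onBoundedFormula (subFormula hfun f h) = f
  | _, .falsum, _ => rfl
  | _, .equal t₁ t₂, _ => by
      simp [subFormula, LHom.onBoundedFormula, onTerm_subTerm, Term.bdEqual]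
  | _, .rel R ts, h => by
      simp only [subFormula, LHom.onBoundedFormula, Relations.boundedFormula]
      congr 1
      funext i
      exact onTerm_subTerm hfun s (ts i)
  | _, .imp f g, h => by
      simp only [subFormula, LHom.onBoundedFormula]
      exact congrArg₂ BoundedFormula.imp (onBoundedFormula_subFormula hfun f _) (onBoundedFormula_subFormula hfun g _)
  | _, .all f, h => by
      simp only [subFormula, LHom.onBoundedFormula]
      exact congrArg BoundedFormula.all (onBoundedFormula_subFormula hfun f _)

/-- Extend a sublanguage structure to the full language. -/
noncomputable def extStructure (hfun : ∀ n, IsEmpty (L.Functions n))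
    (s : Set (Σ k, L.Relations k)) {M : Type*} (S₀ : (sub s).Structure M) :
    L.Structure M where
  funMap := fun f _ => (hfun _).elim f
  RelMap := fun {n} R xs => ∃ h : (⟨n, R⟩ : Σ k, L.Relations k) ∈ s,
    S₀.RelMap (⟨R, h⟩ : (sub s).Relations n) xs

theorem extStructure_isExpansionOn (hfun : ∀ n, IsEmpty (L.Functions n))
    (s : Set (Σ k, L.Relations k)) {M : Type*} (S₀ : (sub s).Structure M) :
    @LHom.IsExpansionOn _ _ (subLHom s) M S₀ (extStructure hfun s S₀) := by
  letI := extStructure hfun s S₀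
  constructor
  · intro n f; exact f.elim
  · rintro n ⟨R, hR⟩ xs
    show (∃ h : (⟨n, R⟩ : Σ k, L.Relations k) ∈ s, S₀.RelMap ⟨R, h⟩ xs) = _
    exact propext ⟨fun ⟨_, hr⟩ => hr, fun hr => ⟨hR, hr⟩⟩

end MonadicAux

open MonadicAux Cardinal

theorem monadic_infinite_domain_invariance (L : FirstOrder.Language)
    (hfun : ∀ n, IsEmpty (L.Functions n))
    (hrel : ∀ n, L.Relations n → n = 1)
    (φ : L.Sentence)
    (h : ∃ (N : Type*) (_ : Infinite N) (S : L.Structure N),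
        @FirstOrder.Language.Sentence.Realize L N S φ) :
    ∀ (M : Type*) [Infinite M], ∃ S : L.Structure M,
        @FirstOrder.Language.Sentence.Realize L M S φ := by
  intro M _
  obtain ⟨N, iN, S, hN⟩ := h
  set s := occ (L := L) φ with hs
  set φ₀ : (sub s).Sentence := subFormula hfun φ (le_refl s) with hφ₀
  have honφ : (subLHom s).onSentence φ₀ = φ := onBoundedFormula_subFormula hfun φ _
  -- N is a model of φ₀ as a (sub s)-structure
  letI S₀N : (sub s).Structure N := (subLHom s).reduct N
  have hNφ₀ : @Sentence.Realize (sub s) N S₀N φ₀ := by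
    rw [← honφ] at hN
    exact ((subLHom s).realize_onSentence (M := N) φ₀).1 hN
  -- Löwenheim–Skolem: get a (sub s)-model of cardinality #M
  obtain ⟨N', hNN', hcard⟩ :=
    exists_elementarilyEquivalent_card_eq (sub s) N #M (aleph0_le_mk M)
      (by
        refine le_trans (lift_le.2 (sub_card_le (occ_finite φ))) ?_
        rw [lift_aleph0]
        exact aleph0_le_lift.2 (aleph0_le_mk M))
  have hN'φ₀ : N' ⊨ φ₀ := (hNN'.realize_sentence φ₀).1 hNφ₀
  -- transfer structure to M along an equiv
  obtain ⟨e⟩ : Nonempty (N' ≃ M) := Cardinal.eq.1 hcard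
  letI S₀M : (sub s).Structure M := e.inducedStructure
  have hMφ₀ : @Sentence.Realize (sub s) M S₀M φ₀ :=
    (StrongHomClass.realize_sentence (Equiv.inducedStructureEquiv e) φ₀).1 hN'φ₀
  -- extend to an L-structure
  letI SM : L.Structure M := extStructure hfun s S₀M
  haveI := extStructure_isExpansionOn hfun s S₀M
  refine ⟨SM, ?_⟩
  rw [← honφ]
  exact ((subLHom s).realize_onSentence (M := M) φ₀).2 hMφ₀
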